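/- arXiv:2301.00095 — 4 statements merged into one kernel-verified Lean document; each statement's English description precedes it below -/
import Mathlib

section
/- Let n ≥ 1 and 0 < α < 2 be real numbers and let (X,d) be a pseudometric space. Then there exists a constant C > 0, depending only on n and α, such that for all s, t > 0 and all x, y, z ∈ X one has q_α(t,x,z)·q_α(s,z,y) ≤ C·q_α(s+t,x,y)·(q_α(t,x,z) + q_α(s,z,y)). -/
/-- The fractional heat kernel profile `q_α(t,x,y) = min{t^{-n/α}, t·d(x,y)^{-n-α}}`,
with the convention that `d(x,y)^{-n-α} = +∞` (so `q_α(t,x,y) = t^{-n/α}`)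
when `d(x,y) = 0`. -/
noncomputable def qProfile {X : Type*} [PseudoMetricSpace X] (n α t : ℝ) (x y : X) : ℝ :=
  if dist x y = 0 then t ^ (-n / α)
  else min (t ^ (-n / α)) (t * dist x y ^ (-n - α))

lemma qProfile_pos {X : Type*} [PseudoMetricSpace X] {n α t : ℝ} (ht : 0 < t)
    (x y : X) : 0 < qProfile n α t x y := by
  unfold qProfile
  split
  · exact Real.rpow_pos_of_pos ht _
  · rename_i h
    have hd : 0 < dist x y := lt_of_le_of_ne dist_nonneg (Ne.symm h)
    exact lt_min (Real.rpow_pos_of_pos ht _) (mul_pos ht (Real.rpow_pos_of_pos hd _))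

lemma qProfile_le_fst {X : Type*} [PseudoMetricSpace X] (n α t : ℝ) (x y : X) :
    qProfile n α t x y ≤ t ^ (-n / α) := by
  unfold qProfile
  split
  · exact le_refl _
  · exact min_le_left _ _

lemma qProfile_le_snd {X : Type*} [PseudoMetricSpace X] (n α t : ℝ) {x y : X}
    (h : dist x y ≠ 0) : qProfile n α t x y ≤ t * dist x y ^ (-n - α) := by
  unfold qProfile
  rw [if_neg h]
  exact min_le_right _ _

/-- The key estimate: `min(q(t,x,z), q(s,z,y)) ≤ C q(s+t,x,y)`. -/
lemma qProfile_key {X : Type*} [PseudoMetricSpace X] {n α : ℝ}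
    (hn : 1 ≤ n) (hα0 : 0 < α) {s t : ℝ} (hs : 0 < s) (ht : 0 < t) (x y z : X) :
    min (qProfile n α t x z) (qProfile n α s z y) ≤
      (2 ^ (n / α) + 2 ^ (n + α)) * qProfile n α (s + t) x y := by
  have hn0 : (0:ℝ) < n := by linarith
  have hst : 0 < s + t := by linarith
  have hCa : (0:ℝ) < 2 ^ (n / α) := Real.rpow_pos_of_pos two_pos _
  have hCb : (0:ℝ) < 2 ^ (n + α) := Real.rpow_pos_of_pos two_pos _
  have he : -n / α ≤ 0 := by
    rw [neg_div]
    exact neg_nonpos.mpr (le_of_lt (div_pos hn0 hα0))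
  have hq3 : (0:ℝ) < (s + t) ^ (-n / α) := Real.rpow_pos_of_pos hst _
  have hhalf : ((s + t) / 2 : ℝ) ^ (-n / α) = 2 ^ (n / α) * (s + t) ^ (-n / α) := by
    rw [Real.div_rpow hst.le (by norm_num : (0:ℝ) ≤ 2), neg_div,
      Real.rpow_neg (by norm_num : (0:ℝ) ≤ 2), div_eq_mul_inv, inv_inv]
    ring
  have hbound1 : min (qProfile n α t x z) (qProfile n α s z y) ≤
      2 ^ (n / α) * (s + t) ^ (-n / α) := by
    rw [← hhalf]
    rcases le_total s t with h | h
    · calc min (qProfile n α t x z) (qProfile n α s z y)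
          ≤ qProfile n α t x z := min_le_left _ _
        _ ≤ t ^ (-n / α) := qProfile_le_fst n α t x z
        _ ≤ ((s + t) / 2) ^ (-n / α) :=
            Real.rpow_le_rpow_of_nonpos (by linarith) (by linarith) he
    · calc min (qProfile n α t x z) (qProfile n α s z y)
          ≤ qProfile n α s z y := min_le_right _ _
        _ ≤ s ^ (-n / α) := qProfile_le_fst n α s z y
        _ ≤ ((s + t) / 2) ^ (-n / α) :=
            Real.rpow_le_rpow_of_nonpos (by linarith) (by linarith) he
  by_cases hxy : dist x y = 0
  · have hq : qProfile n α (s + t) x y = (s + t) ^ (-n / α) := by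
      unfold qProfile; rw [if_pos hxy]
    rw [hq]
    calc min (qProfile n α t x z) (qProfile n α s z y)
        ≤ 2 ^ (n / α) * (s + t) ^ (-n / α) := hbound1
      _ ≤ (2 ^ (n / α) + 2 ^ (n + α)) * (s + t) ^ (-n / α) := by nlinarith
  · have hq : qProfile n α (s + t) x y =
        min ((s + t) ^ (-n / α)) ((s + t) * dist x y ^ (-n - α)) := by
      unfold qProfile; rw [if_neg hxy]
    rw [hq, mul_min_of_nonneg _ _ (by positivity : (0:ℝ) ≤ 2 ^ (n / α) + 2 ^ (n + α))]
    have hd : 0 < dist x y := lt_of_le_of_ne dist_nonneg (Ne.symm hxy)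
    have hdneg : (0:ℝ) < dist x y ^ (-n - α) := Real.rpow_pos_of_pos hd _
    refine le_min ?_ ?_
    · calc min (qProfile n α t x z) (qProfile n α s z y)
          ≤ 2 ^ (n / α) * (s + t) ^ (-n / α) := hbound1
        _ ≤ (2 ^ (n / α) + 2 ^ (n + α)) * (s + t) ^ (-n / α) := by nlinarith
    · have hexp : -n - α ≤ 0 := by linarith
      have hhalfd : ((dist x y) / 2 : ℝ) ^ (-n - α) =
          2 ^ (n + α) * dist x y ^ (-n - α) := by
        rw [Real.div_rpow hd.le (by norm_num : (0:ℝ) ≤ 2),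
          show (-n - α) = -(n + α) by ring,
          Real.rpow_neg (by norm_num : (0:ℝ) ≤ 2), div_eq_mul_inv, inv_inv]
        ring
      have hcases : dist x y / 2 ≤ dist x z ∨ dist x y / 2 ≤ dist z y := by
        by_contra hcon
        push_neg at hcon
        have := dist_triangle x z y
        linarith [hcon.1, hcon.2]
      rcases hcases with hc | hc
      · have hxz : dist x z ≠ 0 := by
          have : 0 < dist x z := lt_of_lt_of_le (by linarith) hc
          exact ne_of_gt this
        calc min (qProfile n α t x z) (qProfile n α s z y)
            ≤ qProfile n α t x z := min_le_left _ _
          _ ≤ t * dist x z ^ (-n - α) := qProfile_le_snd n α t hxz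
          _ ≤ t * ((dist x y / 2) ^ (-n - α)) :=
              mul_le_mul_of_nonneg_left
                (Real.rpow_le_rpow_of_nonpos (by linarith) hc hexp) ht.le
          _ = t * (2 ^ (n + α) * dist x y ^ (-n - α)) := by rw [hhalfd]
          _ ≤ (2 ^ (n / α) + 2 ^ (n + α)) * ((s + t) * dist x y ^ (-n - α)) := by
              nlinarith [mul_pos (mul_pos hCa hst) hdneg,
                mul_pos (mul_pos hCb hs) hdneg]
      · have hzy : dist z y ≠ 0 := by
          have : 0 < dist z y := lt_of_lt_of_le (by linarith) hc
          exact ne_of_gt this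
        calc min (qProfile n α t x z) (qProfile n α s z y)
            ≤ qProfile n α s z y := min_le_right _ _
          _ ≤ s * dist z y ^ (-n - α) := qProfile_le_snd n α s hzy
          _ ≤ s * ((dist x y / 2) ^ (-n - α)) :=
              mul_le_mul_of_nonneg_left
                (Real.rpow_le_rpow_of_nonpos (by linarith) hc hexp) hs.le
          _ = s * (2 ^ (n + α) * dist x y ^ (-n - α)) := by rw [hhalfd]
          _ ≤ (2 ^ (n / α) + 2 ^ (n + α)) * ((s + t) * dist x y ^ (-n - α)) := by
              nlinarith [mul_pos (mul_pos hCa hst) hdneg,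
                mul_pos (mul_pos hCb ht) hdneg]

/-- The 3P-inequality for the fractional heat kernel profile. -/
theorem threeP_inequality {X : Type*} [PseudoMetricSpace X] (n α : ℝ)
    (hn : 1 ≤ n) (hα0 : 0 < α) (hα2 : α < 2) :
    ∃ C : ℝ, 0 < C ∧ ∀ s t : ℝ, 0 < s → 0 < t → ∀ x y z : X,
      qProfile n α t x z * qProfile n α s z y ≤
        C * qProfile n α (s + t) x y * (qProfile n α t x z + qProfile n α s z y) := by
  refine ⟨2 ^ (n / α) + 2 ^ (n + α), by positivity, ?_⟩
  intro s t hs ht x y z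
  have ha : 0 < qProfile n α t x z := qProfile_pos ht x z
  have hb : 0 < qProfile n α s z y := qProfile_pos hs z y
  have hab : qProfile n α t x z * qProfile n α s z y ≤
      min (qProfile n α t x z) (qProfile n α s z y) *
        (qProfile n α t x z + qProfile n α s z y) := by
    rcases le_total (qProfile n α t x z) (qProfile n α s z y) with h | h
    · rw [min_eq_left h]; nlinarith
    · rw [min_eq_right h]; nlinarith
  calc qProfile n α t x z * qProfile n α s z y
      ≤ min (qProfile n α t x z) (qProfile n α s z y) *
          (qProfile n α t x z + qProfile n α s z y) := hab
    _ ≤ ((2 ^ (n / α) + 2 ^ (n + α)) * qProfile n α (s + t) x y) *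
          (qProfile n α t x z + qProfile n α s z y) :=
        mul_le_mul_of_nonneg_right (qProfile_key hn hα0 hs ht x y z) (by positivity)
end

section
/- Let n and α be real numbers with 0 < α < 2 ≤ n. Let (X,d) be a compact metric space equipped with a finite Borel measure μ, and let V : X → ℝ be measurable and satisfy the Kato condition of order α with dimension parameter n. Then lim_{t→0⁺} sup_{y∈X} ∫_0^t ∫_X q_α(r,y,z)·|V(z)| dμ(z) dr = 0; that is, for every ε > 0 there exists t₀ > 0 such that for all t ∈ (0,t₀] and all y ∈ X, ∫_0^t ∫_X q_α(r,y,z)·|V(z)| dμ(z) dr ≤ ε. -/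
open MeasureTheory
open scoped ENNReal

/-- The fractional heat kernel profile `q_α(t,x,y) = min{t^{-n/α}, t·d(x,y)^{-n-α}}`,
valued in `ℝ≥0∞`, with the convention that `d(x,y)^{-n-α} = +∞` (so that
`q_α(t,x,y) = t^{-n/α}`) when `d(x,y) = 0`. -/
noncomputable def qProfileE {X : Type*} [PseudoEMetricSpace X] (n α t : ℝ) (x y : X) : ℝ≥0∞ :=
  min (ENNReal.ofReal t ^ (-n / α)) (ENNReal.ofReal t * edist x y ^ (-n - α))

/-- `V` satisfies the Kato condition of order `α` with dimension parameter `n`: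
`lim_{r→0⁺} sup_{x∈X} ∫_{B_r(x)} d(x,y)^{α−n} |V(y)| dμ(y) = 0`
(with the convention `0^{α-n} = +∞` for `α < n`). -/
def KatoCondition {X : Type*} [MetricSpace X] [MeasurableSpace X]
    (μ : Measure X) (n α : ℝ) (V : X → ℝ) : Prop :=
  ∀ ε : ℝ, 0 < ε → ∃ r₀ : ℝ, 0 < r₀ ∧ ∀ r : ℝ, 0 < r → r ≤ r₀ → ∀ x : X,
    ∫⁻ y in Metric.ball x r, edist x y ^ (α - n) * ENNReal.ofReal |V y| ∂μ ≤
      ENNReal.ofReal ε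


section AuxKato
open Set

lemma ennreal_rpow_anti {a b : ℝ≥0∞} (hab : a ≤ b) {c : ℝ} (hc : c ≤ 0) :
    b ^ c ≤ a ^ c := by
  rw [← neg_neg c, ENNReal.rpow_neg a, ENNReal.rpow_neg b]
  exact ENNReal.inv_le_inv.mpr (ENNReal.rpow_le_rpow hab (neg_nonneg.mpr hc))

lemma aux_linear (a : ℝ) (K : ℝ≥0∞) :
    ∫⁻ r in Set.Ioc (0:ℝ) a, ENNReal.ofReal r * K ≤
      ENNReal.ofReal a * ENNReal.ofReal a * K := by
  calc ∫⁻ r in Set.Ioc (0:ℝ) a, ENNReal.ofReal r * K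
      ≤ ∫⁻ _r in Set.Ioc (0:ℝ) a, ENNReal.ofReal a * K := by
        refine setLIntegral_mono' measurableSet_Ioc fun r hr => ?_
        exact mul_le_mul_left (ENNReal.ofReal_le_ofReal hr.2) K
    _ = ENNReal.ofReal a * K * volume (Set.Ioc (0:ℝ) a) := setLIntegral_const _ _
    _ ≤ ENNReal.ofReal a * ENNReal.ofReal a * K := by
        rw [Real.volume_Ioc]; ring_nf; exact le_rfl

lemma aux_tail {p : ℝ} (hp : p < -1) {s : ℝ} (hs : 0 < s) :
    ∫⁻ r in Set.Ioi s, ENNReal.ofReal r ^ p =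
      ENNReal.ofReal (s ^ (p+1) / (-(p+1))) := by
  have h1 : ∫⁻ r in Set.Ioi s, ENNReal.ofReal r ^ p
      = ∫⁻ r in Set.Ioi s, ENNReal.ofReal (r ^ p) := by
    refine setLIntegral_congr_fun measurableSet_Ioi (fun r hr => ?_)
    exact ENNReal.ofReal_rpow_of_pos (hs.trans hr)
  rw [h1, ← ofReal_integral_eq_lintegral_ofReal
      (integrableOn_Ioi_rpow_of_lt hp hs)
      (ae_restrict_of_forall_mem measurableSet_Ioi fun r hr =>
        Real.rpow_nonneg (hs.trans hr).le _)]
  rw [integral_Ioi_rpow_of_lt hp hs]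
  congr 1
  rw [neg_div, div_neg]

lemma key_pointwise {X : Type*} [PseudoMetricSpace X] (n α : ℝ) (hα0 : 0 < α)
    (hαn : α < n) (y z : X) :
    ∫⁻ r in Set.Ioi (0:ℝ),
        min (ENNReal.ofReal r ^ (-n/α)) (ENNReal.ofReal r * edist y z ^ (-n-α))
      ≤ (1 + ENNReal.ofReal (α/(n-α))) * edist y z ^ (α - n) := by
  rcases eq_or_ne (edist y z) 0 with hd | hd
  · have htop : (1 + ENNReal.ofReal (α/(n-α))) * edist y z ^ (α - n) = ⊤ := by
      rw [hd, ENNReal.zero_rpow_of_neg (by linarith : α - n < 0), ENNReal.mul_top]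
      simp
    rw [htop]; exact le_top
  have hne : edist y z ≠ ∞ := edist_ne_top y z
  set d : ℝ≥0∞ := edist y z with hd'
  set dr : ℝ := d.toReal with hdr'
  have hdr : 0 < dr := ENNReal.toReal_pos hd hne
  have hdof : ENNReal.ofReal dr = d := ENNReal.ofReal_toReal hne
  set s : ℝ := dr ^ α with hs'
  have hs : 0 < s := Real.rpow_pos_of_pos hdr α
  have hsplit : Set.Ioc (0:ℝ) s ∪ Set.Ioi s = Set.Ioi (0:ℝ) :=
    Set.Ioc_union_Ioi_eq_Ioi hs.le
  have hp : -n/α < -1 := by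
    rw [neg_div, neg_lt_neg_iff]
    exact (one_lt_div hα0).mpr hαn
  have hofs : ENNReal.ofReal s = d ^ α := by
    rw [hs', ← ENNReal.ofReal_rpow_of_pos hdr, hdof]
  calc ∫⁻ r in Set.Ioi (0:ℝ),
        min (ENNReal.ofReal r ^ (-n/α)) (ENNReal.ofReal r * d ^ (-n-α))
      = (∫⁻ r in Set.Ioc (0:ℝ) s,
          min (ENNReal.ofReal r ^ (-n/α)) (ENNReal.ofReal r * d ^ (-n-α))) +
        ∫⁻ r in Set.Ioi s,
          min (ENNReal.ofReal r ^ (-n/α)) (ENNReal.ofReal r * d ^ (-n-α)) := by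
        rw [← hsplit, lintegral_union measurableSet_Ioi Set.Ioc_disjoint_Ioi_same]
    _ ≤ (∫⁻ r in Set.Ioc (0:ℝ) s, ENNReal.ofReal r * d ^ (-n-α)) +
        ∫⁻ r in Set.Ioi s, ENNReal.ofReal r ^ (-n/α) := by
        gcongr
        · exact min_le_right _ _
        · exact min_le_left _ _
    _ ≤ ENNReal.ofReal s * ENNReal.ofReal s * d ^ (-n-α) +
        ENNReal.ofReal (s ^ (-n/α+1) / (-(-n/α+1))) := by
        gcongr
        · exact aux_linear s _
        · exact (aux_tail hp hs).le
    _ = 1 * d ^ (α - n) + ENNReal.ofReal (α/(n-α)) * d ^ (α - n) := by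
        congr 1
        · rw [one_mul, hofs, ← ENNReal.rpow_add _ _ hd hne,
            ← ENNReal.rpow_add _ _ hd hne]
          congr 1; ring
        · have h1 : s ^ (-n/α+1) = dr ^ (α - n) := by
            rw [hs', ← Real.rpow_mul hdr.le]
            congr 1
            field_simp
            ring
          have h2 : -(-n/α+1) = (n-α)/α := by field_simp; ring
          have h3 : s ^ (-n/α+1) / (-(-n/α+1)) = (α/(n-α)) * dr ^ (α-n) := by
            rw [h1, h2, div_div_eq_mul_div]; ring
          rw [h3, ENNReal.ofReal_mul (le_of_lt (div_pos hα0 (by linarith))),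
            ← ENNReal.ofReal_rpow_of_pos hdr, hdof]
    _ = (1 + ENNReal.ofReal (α/(n-α))) * d ^ (α - n) := by rw [add_mul]

lemma kato_integrable {X : Type*} [MetricSpace X] [CompactSpace X]
    [MeasurableSpace X] [BorelSpace X] (μ : Measure X)
    (n α : ℝ) (hαn : α < n) (V : X → ℝ) (hKato : KatoCondition μ n α V) :
    ∫⁻ z, ENNReal.ofReal |V z| ∂μ < ⊤ := by
  obtain ⟨r₁, hr₁, hbd⟩ := hKato 1 one_pos
  set B : ℝ≥0∞ := ENNReal.ofReal r₁ ^ (n - α) with hB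
  have hBlt : B < ⊤ := ENNReal.rpow_lt_top_of_nonneg (by linarith) ENNReal.ofReal_ne_top
  have hball : ∀ x : X, ∫⁻ z in Metric.ball x r₁, ENNReal.ofReal |V z| ∂μ ≤ B := by
    intro x
    have hpt : ∀ z ∈ Metric.ball x r₁,
        ENNReal.ofReal |V z| ≤ B * (edist x z ^ (α - n) * ENNReal.ofReal |V z|) := by
      intro z hz
      have hlt : edist x z ≤ ENNReal.ofReal r₁ := by
        rw [edist_dist]
        exact ENNReal.ofReal_le_ofReal (Metric.mem_ball'.mp hz).le
      have h1 : (1 : ℝ≥0∞) ≤ B * edist x z ^ (α - n) := by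
        have : ENNReal.ofReal r₁ ^ (α - n) ≤ edist x z ^ (α - n) :=
          ennreal_rpow_anti hlt (by linarith)
        calc (1 : ℝ≥0∞) = B * ENNReal.ofReal r₁ ^ (α - n) := by
              rw [hB, ← ENNReal.rpow_add _ _ (by simpa using hr₁) ENNReal.ofReal_ne_top]
              norm_num
          _ ≤ B * edist x z ^ (α - n) := mul_le_mul_right this B
      calc ENNReal.ofReal |V z| = 1 * ENNReal.ofReal |V z| := (one_mul _).symm
        _ ≤ B * edist x z ^ (α - n) * ENNReal.ofReal |V z| :=
            mul_le_mul_left h1 _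
        _ = B * (edist x z ^ (α - n) * ENNReal.ofReal |V z|) := mul_assoc _ _ _
    calc ∫⁻ z in Metric.ball x r₁, ENNReal.ofReal |V z| ∂μ
        ≤ ∫⁻ z in Metric.ball x r₁, B * (edist x z ^ (α - n) * ENNReal.ofReal |V z|) ∂μ :=
          setLIntegral_mono' Metric.isOpen_ball.measurableSet hpt
      _ = B * ∫⁻ z in Metric.ball x r₁, edist x z ^ (α - n) * ENNReal.ofReal |V z| ∂μ := by
          rw [lintegral_const_mul']
          exact hBlt.ne
      _ ≤ B * ENNReal.ofReal 1 := mul_le_mul_right (hbd r₁ hr₁ le_rfl x) B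
      _ ≤ B := by simp
  obtain ⟨S, hS⟩ := isCompact_univ.elim_finite_subcover (fun x : X => Metric.ball x r₁)
    (fun x => Metric.isOpen_ball) (fun x _ => mem_iUnion.mpr ⟨x, Metric.mem_ball_self hr₁⟩)
  calc ∫⁻ z, ENNReal.ofReal |V z| ∂μ
      = ∫⁻ z in Set.univ, ENNReal.ofReal |V z| ∂μ := (setLIntegral_univ _).symm
    _ ≤ ∫⁻ z in ⋃ x ∈ S, Metric.ball x r₁, ENNReal.ofReal |V z| ∂μ :=
        lintegral_mono_set hS
    _ = ∫⁻ z in ⋃ x : S, Metric.ball (x : X) r₁, ENNReal.ofReal |V z| ∂μ := by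
        have : (⋃ x ∈ S, Metric.ball x r₁) = ⋃ x : S, Metric.ball (x : X) r₁ := by
          ext z; simp
        rw [this]
    _ ≤ ∑' x : S, ∫⁻ z in Metric.ball (x : X) r₁, ENNReal.ofReal |V z| ∂μ :=
        lintegral_iUnion_le _ _
    _ ≤ ∑' _x : S, B := ENNReal.tsum_le_tsum fun x => hball _
    _ = ∑ _x : (S : Finset X), B := tsum_fintype _
    _ < ⊤ := ENNReal.sum_lt_top.mpr fun _ _ => hBlt


end AuxKato

/-- For a Kato-class potential `V` on a compact metric measure space,
`lim_{t→0⁺} sup_{y∈X} ∫_0^t ∫_X q_α(r,y,z)·|V(z)| dμ(z) dr = 0`. -/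
theorem kato_implies_small_time_integral {X : Type*} [MetricSpace X] [CompactSpace X]
    [MeasurableSpace X] [BorelSpace X] (μ : Measure X) [IsFiniteMeasure μ]
    (n α : ℝ) (hα0 : 0 < α) (hα2 : α < 2) (hn : 2 ≤ n)
    (V : X → ℝ) (hV : Measurable V) (hKato : KatoCondition μ n α V) :
    ∀ ε : ℝ, 0 < ε → ∃ t₀ : ℝ, 0 < t₀ ∧ ∀ t : ℝ, 0 < t → t ≤ t₀ → ∀ y : X,
      ∫⁻ r in Set.Ioc (0 : ℝ) t, ∫⁻ z, qProfileE n α r y z * ENNReal.ofReal |V z| ∂μ ≤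
        ENNReal.ofReal ε := by
  intro ε hε
  have hαn : α < n := lt_of_lt_of_le hα2 hn
  have hna : 0 < n - α := by linarith
  set cR : ℝ := α / (n - α) with hcR
  have hcR0 : 0 ≤ cR := le_of_lt (div_pos hα0 hna)
  set C : ℝ≥0∞ := 1 + ENNReal.ofReal cR with hC
  have hCof : C = ENNReal.ofReal (1 + cR) := by
    rw [hC, ENNReal.ofReal_add (by norm_num) hcR0, ENNReal.ofReal_one]
  set ε₁ : ℝ := ε / (2 * (1 + cR)) with hε₁def
  have hε₁ : 0 < ε₁ := div_pos hε (by positivity)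
  obtain ⟨r₀, hr₀, hKb⟩ := hKato ε₁ hε₁
  have hCε : C * ENNReal.ofReal ε₁ = ENNReal.ofReal (ε / 2) := by
    rw [hCof, ← ENNReal.ofReal_mul (by positivity)]
    congr 1
    rw [hε₁def]
    field_simp
  set I : ℝ≥0∞ := ∫⁻ z, ENNReal.ofReal |V z| ∂μ with hI
  have hIlt : I < ⊤ := kato_integrable μ n α hαn V hKato
  set c₂ : ℝ≥0∞ := ENNReal.ofReal r₀ ^ (-n - α) * I with hc₂def
  have hc₂ : c₂ < ⊤ := by
    apply ENNReal.mul_lt_top _ hIlt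
    rw [show -n - α = -(n + α) by ring, ENNReal.rpow_neg]
    exact ENNReal.inv_lt_top.mpr (ENNReal.rpow_pos (by simpa using hr₀) ENNReal.ofReal_ne_top)
  -- choose δ
  obtain ⟨δ, hδ0, hδ⟩ : ∃ δ : ℝ, 0 < δ ∧ ENNReal.ofReal δ * c₂ ≤ ENNReal.ofReal (ε / 2) := by
    rcases eq_or_ne c₂ 0 with h0 | h0
    · exact ⟨1, one_pos, by rw [h0, mul_zero]; exact zero_le⟩
    · have htR : 0 < c₂.toReal := ENNReal.toReal_pos h0 hc₂.ne
      refine ⟨(ε / 2) / c₂.toReal, by positivity, ?_⟩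
      calc ENNReal.ofReal ((ε/2)/c₂.toReal) * c₂
          = ENNReal.ofReal ((ε/2)/c₂.toReal) * ENNReal.ofReal (c₂.toReal) := by
            rw [ENNReal.ofReal_toReal hc₂.ne]
        _ = ENNReal.ofReal ((ε/2)/c₂.toReal * c₂.toReal) :=
            (ENNReal.ofReal_mul (by positivity)).symm
        _ = ENNReal.ofReal (ε/2) := by rw [div_mul_cancel₀ _ htR.ne']
        _ ≤ ENNReal.ofReal (ε/2) := le_rfl
  refine ⟨min 1 δ, lt_min one_pos hδ0, fun t ht ht₀ y => ?_⟩
  have ht1 : t ≤ 1 := ht₀.trans (min_le_left _ _)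
  have htδ : t ≤ δ := ht₀.trans (min_le_right _ _)
  set W : X → ℝ≥0∞ := fun z => ENNReal.ofReal |V z| with hW
  set q : ℝ → X → ℝ≥0∞ := fun r z =>
    min (ENNReal.ofReal r ^ (-n/α)) (ENNReal.ofReal r * edist y z ^ (-n-α)) with hq
  have hWmeas : Measurable W := ENNReal.measurable_ofReal.comp hV.abs
  have hqmeas : Measurable (Function.uncurry fun r z => q r z * W z) := by
    apply Measurable.mul
    · apply Measurable.min
      · exact (ENNReal.continuous_rpow_const.measurable).comp
          (ENNReal.measurable_ofReal.comp measurable_fst)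
      · exact ((ENNReal.measurable_ofReal.comp measurable_fst)).mul
          ((ENNReal.continuous_rpow_const.measurable).comp
            ((continuous_const.edist continuous_snd).measurable))
    · exact hWmeas.comp measurable_snd
  have hq1 : ∀ z : X, Measurable fun r : ℝ => q r z := by
    intro z
    apply Measurable.min
    · exact ENNReal.continuous_rpow_const.measurable.comp ENNReal.measurable_ofReal
    · exact ENNReal.measurable_ofReal.mul_const _
  have hrfin : ENNReal.ofReal r₀ ^ (-n - α) ≠ ⊤ := by
    rw [show -n - α = -(n + α) by ring, ENNReal.rpow_neg]
    exact (ENNReal.inv_lt_top.mpr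
      (ENNReal.rpow_pos (by simpa using hr₀) ENNReal.ofReal_ne_top)).ne
  have hnear : ∫⁻ z in Metric.ball y r₀,
      (∫⁻ r in Set.Ioc (0:ℝ) t, q r z) * W z ∂μ ≤ ENNReal.ofReal (ε/2) := by
    calc ∫⁻ z in Metric.ball y r₀, (∫⁻ r in Set.Ioc (0:ℝ) t, q r z) * W z ∂μ
        ≤ ∫⁻ z in Metric.ball y r₀, C * (edist y z ^ (α - n) * W z) ∂μ := by
          refine setLIntegral_mono' Metric.isOpen_ball.measurableSet fun z hz => ?_
          rw [← mul_assoc]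
          refine mul_le_mul_left ?_ _
          refine le_trans (lintegral_mono_set Set.Ioc_subset_Ioi_self) ?_
          exact key_pointwise n α hα0 hαn y z
      _ = C * ∫⁻ z in Metric.ball y r₀, edist y z ^ (α - n) * W z ∂μ :=
          lintegral_const_mul' _ _ (by rw [hCof]; exact ENNReal.ofReal_ne_top)
      _ ≤ C * ENNReal.ofReal ε₁ := mul_le_mul_right (hKb r₀ hr₀ le_rfl y) C
      _ = ENNReal.ofReal (ε/2) := hCε
  have hfar : ∫⁻ z in (Metric.ball y r₀)ᶜ,
      (∫⁻ r in Set.Ioc (0:ℝ) t, q r z) * W z ∂μ ≤ ENNReal.ofReal (ε/2) := by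
    have hptfar : ∀ z ∈ (Metric.ball y r₀)ᶜ, (∫⁻ r in Set.Ioc (0:ℝ) t, q r z) ≤
        ENNReal.ofReal t * ENNReal.ofReal t * ENNReal.ofReal r₀ ^ (-n - α) := by
      intro z hz
      have hdist : ENNReal.ofReal r₀ ≤ edist y z := by
        rw [edist_dist]
        exact ENNReal.ofReal_le_ofReal (by simpa [Metric.mem_ball', dist_comm] using hz)
      calc ∫⁻ r in Set.Ioc (0:ℝ) t, q r z
          ≤ ∫⁻ r in Set.Ioc (0:ℝ) t, ENNReal.ofReal r * edist y z ^ (-n-α) :=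
            lintegral_mono fun r => min_le_right _ _
        _ ≤ ENNReal.ofReal t * ENNReal.ofReal t * edist y z ^ (-n-α) := aux_linear t _
        _ ≤ ENNReal.ofReal t * ENNReal.ofReal t * ENNReal.ofReal r₀ ^ (-n-α) :=
            mul_le_mul_right (ennreal_rpow_anti hdist (by linarith)) _
    calc ∫⁻ z in (Metric.ball y r₀)ᶜ, (∫⁻ r in Set.Ioc (0:ℝ) t, q r z) * W z ∂μ
        ≤ ∫⁻ z in (Metric.ball y r₀)ᶜ,
            ENNReal.ofReal t * ENNReal.ofReal t * ENNReal.ofReal r₀ ^ (-n-α) * W z ∂μ :=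
          setLIntegral_mono' Metric.isOpen_ball.measurableSet.compl fun z hz =>
            mul_le_mul_left (hptfar z hz) _
      _ = ENNReal.ofReal t * ENNReal.ofReal t * ENNReal.ofReal r₀ ^ (-n-α) *
            ∫⁻ z in (Metric.ball y r₀)ᶜ, W z ∂μ :=
          lintegral_const_mul' _ _
            (ENNReal.mul_ne_top
              (ENNReal.mul_ne_top ENNReal.ofReal_ne_top ENNReal.ofReal_ne_top) hrfin)
      _ ≤ ENNReal.ofReal t * ENNReal.ofReal t * ENNReal.ofReal r₀ ^ (-n-α) * I :=
          mul_le_mul_right (setLIntegral_le_lintegral _ _) _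
      _ = ENNReal.ofReal (t*t) * c₂ := by
          rw [hc₂def, ENNReal.ofReal_mul ht.le]; ring
      _ ≤ ENNReal.ofReal δ * c₂ :=
          mul_le_mul_left (ENNReal.ofReal_le_ofReal (by nlinarith)) _
      _ ≤ ENNReal.ofReal (ε/2) := hδ
  calc ∫⁻ r in Set.Ioc (0:ℝ) t, ∫⁻ z, qProfileE n α r y z * ENNReal.ofReal |V z| ∂μ
      = ∫⁻ z, (∫⁻ r in Set.Ioc (0:ℝ) t, q r z) * W z ∂μ := by
        rw [show (fun r => ∫⁻ z, qProfileE n α r y z * ENNReal.ofReal |V z| ∂μ)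
            = fun r => ∫⁻ z, q r z * W z ∂μ from rfl]
        rw [lintegral_lintegral_swap hqmeas.aemeasurable]
        congr 1
        ext z
        exact lintegral_mul_const' (W z) _ ENNReal.ofReal_ne_top
    _ = (∫⁻ z in Metric.ball y r₀, (∫⁻ r in Set.Ioc (0:ℝ) t, q r z) * W z ∂μ)
        + ∫⁻ z in (Metric.ball y r₀)ᶜ, (∫⁻ r in Set.Ioc (0:ℝ) t, q r z) * W z ∂μ :=
        (lintegral_add_compl _ Metric.isOpen_ball.measurableSet).symm
    _ ≤ ENNReal.ofReal (ε/2) + ENNReal.ofReal (ε/2) := add_le_add hnear hfar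
    _ = ENNReal.ofReal ε := by
        rw [← ENNReal.ofReal_add (by positivity) (by positivity)]
        norm_num
end

section
/- Let n > α > 0 be real numbers. Then there exists a constant C > 0, depending only on n and α, such that for every t ∈ (0,1] and every d > 0, ∫_0^t min{r^{−n/α}, r·d^{−n−α}} dr ≤ C·( t·d^{α−n} + 𝟙_{{d < t^{1/(2α)}}}·d^{α−n} ), where 𝟙_{{d < t^{1/(2α)}}} equals 1 if d < t^{1/(2α)} and 0 otherwise. -/
open MeasureTheory
open scoped ENNReal

lemma aux_linear_s4 (c s : ℝ) (hc : 0 ≤ c) (hs : 0 < s) :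
    ∫⁻ r in Set.Ioc (0:ℝ) s, ENNReal.ofReal (r * c) = ENNReal.ofReal (s^2/2 * c) := by
  rw [← MeasureTheory.ofReal_integral_eq_lintegral_ofReal]
  · congr 1
    rw [← intervalIntegral.integral_of_le hs.le, intervalIntegral.integral_mul_const,
      integral_id]
    ring
  · exact (Continuous.integrableOn_Ioc (continuous_id.mul continuous_const))
  · filter_upwards [ae_restrict_mem measurableSet_Ioc] with r hr
    exact mul_nonneg hr.1.le hc

lemma aux_rpow (p s : ℝ) (hp : p < -1) (hs : 0 < s) :
    ∫⁻ r in Set.Ioi s, ENNReal.ofReal (r ^ p) = ENNReal.ofReal (-s^(p+1)/(p+1)) := by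
  rw [← MeasureTheory.ofReal_integral_eq_lintegral_ofReal]
  · rw [integral_Ioi_rpow_of_lt hp hs]
  · exact integrableOn_Ioi_rpow_of_lt hp hs
  · filter_upwards [ae_restrict_mem measurableSet_Ioi] with r hr
    exact Real.rpow_nonneg (hs.le.trans (le_of_lt hr)) p

/-- The key one-dimensional integral estimate: for `0 < α < n`, `t ∈ (0,1]` and `d > 0`,
`∫_0^t min{r^{−n/α}, r·d^{−n−α}} dr ≤ C (t·d^{α−n} + 𝟙_{d < t^{1/(2α)}}·d^{α−n})`. -/
theorem time_integral_of_heat_profile_bound (n α : ℝ) (hα0 : 0 < α) (hαn : α < n) :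
    ∃ C : ℝ, 0 < C ∧ ∀ t : ℝ, 0 < t → t ≤ 1 → ∀ d : ℝ, 0 < d →
      ∫⁻ r in Set.Ioc (0 : ℝ) t, ENNReal.ofReal (min (r ^ (-n / α)) (r * d ^ (-n - α))) ≤
        ENNReal.ofReal (C * (t * d ^ (α - n) +
          (if d < t ^ (1 / (2 * α)) then (1 : ℝ) else 0) * d ^ (α - n))) := by
  have hn : 0 < n := hα0.trans hαn
  have hna : 0 < n - α := sub_pos.mpr hαn
  have hq : 0 < α / (n - α) := div_pos hα0 hna
  have hC : 0 < 1/2 + α/(n-α) := by linarith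
  set p : ℝ := -n / α with hpdef
  have hp1 : p < -1 := by
    rw [hpdef, div_lt_iff₀ hα0]
    linarith
  refine ⟨1/2 + α/(n-α), hC, ?_⟩
  intro t ht ht1 d hd
  have hdan : (0:ℝ) < d ^ (α - n) := Real.rpow_pos_of_pos hd _
  have hdc : (0:ℝ) < d ^ (-n - α) := Real.rpow_pos_of_pos hd _
  have hkey : d ^ (2*α) * d ^ (-n - α) = d ^ (α - n) := by
    rw [← Real.rpow_add hd]; ring_nf
  by_cases hind : d < t ^ (1 / (2 * α))
  · -- indicator on: bound whole integral by (1/2 + α/(n-α)) * d^(α-n)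
    simp only [if_pos hind, one_mul]
    have hgoal : ∫⁻ r in Set.Ioc (0 : ℝ) t,
        ENNReal.ofReal (min (r ^ p) (r * d ^ (-n - α))) ≤
        ENNReal.ofReal ((1/2 + α/(n-α)) * d ^ (α - n)) := by
      have hs : (0:ℝ) < d ^ α := Real.rpow_pos_of_pos hd _
      have hs2 : (d ^ α)^2 * d ^ (-n - α) = d ^ (α - n) := by
        rw [← hkey, ← Real.rpow_natCast (d ^ α) 2, ← Real.rpow_mul hd.le]
        norm_num [mul_comm]
      by_cases hst : t ≤ d ^ α
      · calc ∫⁻ r in Set.Ioc (0 : ℝ) t, ENNReal.ofReal (min (r ^ p) (r * d ^ (-n - α)))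
            ≤ ∫⁻ r in Set.Ioc (0 : ℝ) t, ENNReal.ofReal (r * d ^ (-n - α)) :=
              lintegral_mono fun r => ENNReal.ofReal_le_ofReal (min_le_right _ _)
          _ = ENNReal.ofReal (t^2/2 * d ^ (-n - α)) := aux_linear_s4 _ _ hdc.le ht
          _ ≤ _ := by
              apply ENNReal.ofReal_le_ofReal
              have h1 : t^2 * d ^ (-n - α) ≤ (d^α)^2 * d ^ (-n - α) := by
                apply mul_le_mul_of_nonneg_right _ hdc.le
                exact pow_le_pow_left₀ ht.le hst 2
              rw [hs2] at h1
              nlinarith [mul_pos hq hdan]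
      · push_neg at hst
        rw [← Set.Ioc_union_Ioc_eq_Ioc hs.le hst.le,
          lintegral_union measurableSet_Ioc (Set.Ioc_disjoint_Ioc_of_le le_rfl)]
        have hA : ∫⁻ r in Set.Ioc (0 : ℝ) (d^α),
            ENNReal.ofReal (min (r ^ p) (r * d ^ (-n - α))) ≤
            ENNReal.ofReal (1/2 * d ^ (α - n)) := by
          calc ∫⁻ r in Set.Ioc (0 : ℝ) (d^α), ENNReal.ofReal (min (r ^ p) (r * d ^ (-n - α)))
              ≤ ∫⁻ r in Set.Ioc (0 : ℝ) (d^α), ENNReal.ofReal (r * d ^ (-n - α)) :=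
                lintegral_mono fun r => ENNReal.ofReal_le_ofReal (min_le_right _ _)
            _ = ENNReal.ofReal ((d^α)^2/2 * d ^ (-n - α)) := aux_linear_s4 _ _ hdc.le hs
            _ = _ := by
                congr 1
                rw [div_mul_eq_mul_div, hs2]
                ring
        have hB : ∫⁻ r in Set.Ioc (d^α) t,
            ENNReal.ofReal (min (r ^ p) (r * d ^ (-n - α))) ≤
            ENNReal.ofReal (α/(n-α) * d ^ (α - n)) := by
          calc ∫⁻ r in Set.Ioc (d^α) t, ENNReal.ofReal (min (r ^ p) (r * d ^ (-n - α)))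
              ≤ ∫⁻ r in Set.Ioi (d^α), ENNReal.ofReal (r ^ p) := by
                refine le_trans (lintegral_mono fun r =>
                  ENNReal.ofReal_le_ofReal (min_le_left _ _)) ?_
                exact lintegral_mono_set Set.Ioc_subset_Ioi_self
            _ = ENNReal.ofReal (-(d^α)^(p+1)/(p+1)) := aux_rpow p _ hp1 hs
            _ ≤ _ := by
                apply le_of_eq
                congr 1
                have hne2 : α - n ≠ 0 := by linarith
                have he : (d^α)^(p+1) = d ^ (α - n) := by
                  rw [← Real.rpow_mul hd.le]
                  congr 1
                  rw [hpdef]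
                  field_simp
                  ring
                rw [he, hpdef]
                field_simp [hne2, hna.ne', hα0.ne']
                rw [show -n + α = -(n - α) by ring, div_neg, neg_neg, div_self hna.ne']
        calc _ ≤ ENNReal.ofReal (1/2 * d ^ (α - n)) + ENNReal.ofReal (α/(n-α) * d ^ (α - n)) :=
              add_le_add hA hB
          _ = ENNReal.ofReal ((1/2 + α/(n-α)) * d ^ (α - n)) := by
              rw [← ENNReal.ofReal_add (by positivity) (le_of_lt (mul_pos hq hdan))]
              congr 1
              ring
    refine hgoal.trans (ENNReal.ofReal_le_ofReal ?_)
    nlinarith [mul_pos hC (mul_pos ht hdan)]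
  · -- indicator off: t ≤ d^(2α)
    simp only [if_neg hind, zero_mul, add_zero]
    push_neg at hind
    have htd : t ≤ d ^ (2*α) := by
      have h := Real.rpow_le_rpow (Real.rpow_nonneg ht.le _) hind
        (by positivity : (0:ℝ) ≤ 2*α)
      rwa [← Real.rpow_mul ht.le, one_div,
        inv_mul_cancel₀ (by positivity : (2*α) ≠ 0), Real.rpow_one] at h
    calc ∫⁻ r in Set.Ioc (0 : ℝ) t, ENNReal.ofReal (min (r ^ p) (r * d ^ (-n - α)))
        ≤ ∫⁻ r in Set.Ioc (0 : ℝ) t, ENNReal.ofReal (r * d ^ (-n - α)) :=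
          lintegral_mono fun r => ENNReal.ofReal_le_ofReal (min_le_right _ _)
      _ = ENNReal.ofReal (t^2/2 * d ^ (-n - α)) := aux_linear_s4 _ _ hdc.le ht
      _ ≤ _ := by
          apply ENNReal.ofReal_le_ofReal
          have h3 : t^2 * d ^ (-n-α) ≤ t * d ^ (α-n) := by
            calc t^2 * d ^ (-n-α) = t*t*d^(-n-α) := by ring
              _ ≤ t*d^(2*α)*d^(-n-α) :=
                  mul_le_mul_of_nonneg_right
                    (mul_le_mul_of_nonneg_left htd ht.le) hdc.le
              _ = t*d^(α-n) := by rw [mul_assoc, hkey]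
          nlinarith [mul_pos hq (mul_pos ht hdan)]
end

section
/- Let n ≥ 1 be an integer and let β : ℝ → ℂ be a smooth function whose support is contained in {t ∈ ℝ : 1/2 ≤ |t| ≤ 2}. Then for every N ∈ ℕ there exists a constant C > 0, depending only on n, N and β, such that for all real R ≥ 1 and all r ∈ ℝ, | ∫_{ℝ^n} β(‖ξ‖/R)·e^{i r ξ₁} dξ | ≤ C · R^n · (1 + R|r|)^{−N}, where ξ₁ denotes the first coordinate of ξ ∈ ℝⁿ and ‖ξ‖ its Euclidean norm. -/
open MeasureTheory
open scoped ENNReal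

set_option maxHeartbeats 1000000

open Real FourierTransform
open scoped RealInnerProductSpace

-- aux: Schwartz map from radial compactly supported
noncomputable def lpAux (n : ℕ) (β : ℝ → ℂ) (hβ : ContDiff ℝ (⊤ : ℕ∞) β)
    (hsupp : Function.support β ⊆ {t : ℝ | 1 / 2 ≤ |t| ∧ |t| ≤ 2}) :
    SchwartzMap (EuclideanSpace ℝ (Fin n)) ℂ := by
  set E := EuclideanSpace ℝ (Fin n)
  have hβ0 : ∀ t : ℝ, |t| < 1 / 2 → β t = 0 := by
    intro t ht
    by_contra h
    exact absurd (hsupp (Function.mem_support.2 h)).1 (not_le.2 ht)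
  have hgsmooth : ContDiff ℝ (⊤ : ℕ∞) (fun η : E => β ‖η‖) := by
    rw [contDiff_iff_contDiffAt]
    intro x
    rcases eq_or_ne x 0 with rfl | hx
    · refine contDiffAt_const (c := (0 : ℂ)) |>.congr_of_eventuallyEq ?_
      filter_upwards [Metric.ball_mem_nhds (0 : E) (by norm_num : (0:ℝ) < 1/2)] with y hy
      exact hβ0 ‖y‖ (by simpa [abs_of_nonneg (norm_nonneg y)] using mem_ball_zero_iff.mp hy)
    · exact hβ.contDiffAt.comp x (contDiffAt_norm ℝ hx)
  have hgsupp : HasCompactSupport (fun η : E => β ‖η‖) := by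
    apply HasCompactSupport.intro (isCompact_closedBall (0 : E) 2)
    intro x hx
    by_contra h
    have := (hsupp (Function.mem_support.2 h)).2
    rw [abs_of_nonneg (norm_nonneg x)] at this
    exact hx (mem_closedBall_zero_iff.mpr this)
  refine ⟨fun η => β ‖η‖, hgsmooth, fun k m => ?_⟩
  obtain ⟨C, hC⟩ := (hgsupp.iteratedFDeriv m).exists_bound_of_continuous
    (hgsmooth.continuous_iteratedFDeriv (by exact_mod_cast le_top))
  have hC0 : 0 ≤ C := le_trans (norm_nonneg _) (hC 0)
  refine ⟨2 ^ k * C, fun x => ?_⟩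
  rcases eq_or_ne (iteratedFDeriv ℝ m (fun η : E => β ‖η‖) x) 0 with h | h
  · rw [h, norm_zero, mul_zero]; positivity
  · have hx : x ∈ tsupport (fun η : E => β ‖η‖) := support_iteratedFDeriv_subset m h
    have hx2 : ‖x‖ ≤ 2 := by
      have hsub : tsupport (fun η : E => β ‖η‖) ⊆ Metric.closedBall 0 2 := by
        apply closure_minimal ?_ Metric.isClosed_closedBall
        intro y hy
        have := (hsupp (Function.mem_support.2 hy)).2
        rw [abs_of_nonneg (norm_nonneg y)] at this
        exact mem_closedBall_zero_iff.mpr this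
      exact mem_closedBall_zero_iff.mp (hsub hx)
    calc ‖x‖ ^ k * ‖iteratedFDeriv ℝ m (fun η : E => β ‖η‖) x‖
        ≤ 2 ^ k * C := by
          exact mul_le_mul (pow_le_pow_left₀ (norm_nonneg x) hx2 k) (hC x)
            (norm_nonneg _) (by positivity)

/-- Kernel bound for Littlewood–Paley-type projections: if `β` is smooth and supported in
`{1/2 ≤ |t| ≤ 2}`, then `|∫_{ℝ^n} β(‖ξ‖/R) e^{irξ₁} dξ| ≤ C Rⁿ (1+R|r|)^{−N}`. -/
theorem littlewood_paley_kernel_bound (n : ℕ) (hn : 0 < n) (β : ℝ → ℂ)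
    (hβ : ContDiff ℝ (⊤ : ℕ∞) β)
    (hsupp : Function.support β ⊆ {t : ℝ | 1 / 2 ≤ |t| ∧ |t| ≤ 2}) :
    ∀ N : ℕ, ∃ C : ℝ, 0 < C ∧ ∀ R : ℝ, 1 ≤ R → ∀ r : ℝ,
      ‖∫ ξ : EuclideanSpace ℝ (Fin n),
          β (‖ξ‖ / R) * Complex.exp (Complex.I * ((r * ξ ⟨0, hn⟩ : ℝ) : ℂ))‖ ≤
        C * R ^ n * (1 + R * |r|) ^ (-(N : ℝ)) := by
  intro N
  set f := lpAux n β hβ hsupp with hf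
  set F := SchwartzMap.fourierTransformCLM ℂ f with hF
  obtain ⟨C0, hC0pos, hC0⟩ := F.decay 0 0
  obtain ⟨CN, hCNpos, hCN⟩ := F.decay N 0
  set D := 2 ^ N * (C0 + CN) with hD
  have hDpos : 0 < D := by positivity
  have hFdecay : ∀ w : EuclideanSpace ℝ (Fin n), (1 + ‖w‖) ^ N * ‖F w‖ ≤ D := by
    intro w
    have h1 : ‖F w‖ ≤ C0 := by simpa [norm_iteratedFDeriv_zero] using hC0 w
    have h2 : ‖w‖ ^ N * ‖F w‖ ≤ CN := by simpa [norm_iteratedFDeriv_zero] using hCN w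
    have hwN : (0:ℝ) ≤ ‖w‖ ^ N := pow_nonneg (norm_nonneg w) N
    have hbnd : (1 + ‖w‖) ^ N ≤ 2 ^ N * (1 + ‖w‖ ^ N) := by
      rcases le_total ‖w‖ 1 with h | h
      · calc (1 + ‖w‖) ^ N ≤ 2 ^ N :=
              pow_le_pow_left₀ (by positivity) (by linarith) N
          _ ≤ 2 ^ N * (1 + ‖w‖ ^ N) :=
              le_mul_of_one_le_right (by positivity) (by linarith)
      · calc (1 + ‖w‖) ^ N ≤ (2 * ‖w‖) ^ N :=
              pow_le_pow_left₀ (by positivity) (by linarith) N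
          _ = 2 ^ N * ‖w‖ ^ N := mul_pow 2 ‖w‖ N
          _ ≤ 2 ^ N * (1 + ‖w‖ ^ N) := by nlinarith
    calc (1 + ‖w‖) ^ N * ‖F w‖ ≤ 2 ^ N * (1 + ‖w‖ ^ N) * ‖F w‖ :=
          mul_le_mul_of_nonneg_right hbnd (norm_nonneg _)
      _ = 2 ^ N * (‖F w‖ + ‖w‖ ^ N * ‖F w‖) := by ring
      _ ≤ 2 ^ N * (C0 + CN) := by
          have := add_le_add h1 h2
          nlinarith
  refine ⟨(2 * Real.pi) ^ N * D, by positivity, fun R hR r => ?_⟩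
  have hR0 : 0 < R := lt_of_lt_of_le one_pos hR
  have hπ := Real.pi_pos
  set i0 : Fin n := ⟨0, hn⟩ with hi0
  set w : EuclideanSpace ℝ (Fin n) :=
    (-(R * r / (2 * Real.pi))) • EuclideanSpace.single i0 (1 : ℝ) with hw
  have hwnorm : 2 * Real.pi * ‖w‖ = R * |r| := by
    rw [hw, norm_smul, EuclideanSpace.norm_single, Real.norm_eq_abs, norm_one, mul_one,
      abs_neg, abs_div, abs_of_pos (by positivity : (0:ℝ) < 2 * Real.pi), abs_mul,
      abs_of_pos hR0]
    field_simp
  have key : (∫ ξ : EuclideanSpace ℝ (Fin n),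
        β (‖ξ‖ / R) * Complex.exp (Complex.I * ((r * ξ i0 : ℝ) : ℂ)))
      = (R ^ n : ℝ) • 𝓕 (⇑f) w := by
    have h1 : ∀ ξ : EuclideanSpace ℝ (Fin n),
        (fun v : EuclideanSpace ℝ (Fin n) =>
          Complex.exp (((-2 * Real.pi * ⟪v, w⟫ : ℝ) : ℂ) * Complex.I) • f v) (R⁻¹ • ξ)
        = β (‖ξ‖ / R) * Complex.exp (Complex.I * ((r * ξ i0 : ℝ) : ℂ)) := by
      intro ξ
      have hnorm : ‖R⁻¹ • ξ‖ = ‖ξ‖ / R := by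
        rw [norm_smul, Real.norm_eq_abs, abs_of_pos (inv_pos.2 hR0), inv_mul_eq_div]
      have hinner : ⟪R⁻¹ • ξ, w⟫ = R⁻¹ * (-(R * r / (2 * Real.pi)) * ξ i0) := by
        rw [hw, real_inner_smul_left, real_inner_smul_right,
          EuclideanSpace.inner_single_right]
        simp only [starRingEnd_apply, star_trivial]
        ring
      have harg : -2 * Real.pi * ⟪R⁻¹ • ξ, w⟫ = r * ξ i0 := by
        rw [hinner]
        field_simp
      have hfval : f (R⁻¹ • ξ) = β (‖ξ‖ / R) := by
        show β ‖R⁻¹ • ξ‖ = β (‖ξ‖ / R)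
        rw [hnorm]
      simp only [harg, hfval, smul_eq_mul]
      rw [mul_comm]
      ring_nf
    calc (∫ ξ : EuclideanSpace ℝ (Fin n),
          β (‖ξ‖ / R) * Complex.exp (Complex.I * ((r * ξ i0 : ℝ) : ℂ)))
        = ∫ ξ : EuclideanSpace ℝ (Fin n),
            (fun v : EuclideanSpace ℝ (Fin n) =>
              Complex.exp (((-2 * Real.pi * ⟪v, w⟫ : ℝ) : ℂ) * Complex.I) • f v) (R⁻¹ • ξ) := by
          refine integral_congr_ae (Filter.Eventually.of_forall fun ξ => ?_)
          exact (h1 ξ).symm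
      _ = |R ^ Module.finrank ℝ (EuclideanSpace ℝ (Fin n))| •
            ∫ v : EuclideanSpace ℝ (Fin n),
              Complex.exp (((-2 * Real.pi * ⟪v, w⟫ : ℝ) : ℂ) * Complex.I) • f v :=
          MeasureTheory.Measure.integral_comp_inv_smul volume
            (fun v : EuclideanSpace ℝ (Fin n) =>
              Complex.exp (((-2 * Real.pi * ⟪v, w⟫ : ℝ) : ℂ) * Complex.I) • f v) R
      _ = (R ^ n : ℝ) • 𝓕 (⇑f) w := by
          rw [finrank_euclideanSpace_fin, abs_of_pos (pow_pos hR0 n),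
            Real.fourier_eq']
  rw [key, norm_smul, Real.norm_eq_abs, abs_of_pos (pow_pos hR0 n),
    Real.rpow_neg (by positivity), Real.rpow_natCast]
  have hFw : ‖𝓕 (⇑f) w‖ = ‖F w‖ := by
    rw [hF, SchwartzMap.fourierTransformCLM_apply, SchwartzMap.fourier_coe]
  rw [hFw]
  have hpos : (0:ℝ) < (1 + R * |r|) ^ N := by positivity
  have hkey2 : ‖F w‖ * (1 + R * |r|) ^ N ≤ (2 * Real.pi) ^ N * D := by
    calc ‖F w‖ * (1 + R * |r|) ^ N
        ≤ ‖F w‖ * ((2 * Real.pi) * (1 + ‖w‖)) ^ N := by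
          gcongr
          nlinarith [Real.pi_gt_three, norm_nonneg w]
      _ = (2 * Real.pi) ^ N * ((1 + ‖w‖) ^ N * ‖F w‖) := by rw [mul_pow]; ring
      _ ≤ (2 * Real.pi) ^ N * D := by
          have := hFdecay w
          nlinarith [pow_pos (by positivity : (0:ℝ) < 2 * Real.pi) N]
  have hFw2 : ‖F w‖ ≤ (2 * Real.pi) ^ N * D * ((1 + R * |r|) ^ N)⁻¹ := by
    rw [← div_eq_mul_inv, le_div_iff₀ hpos]
    exact hkey2
  calc R ^ n * ‖F w‖ ≤ R ^ n * ((2 * Real.pi) ^ N * D * ((1 + R * |r|) ^ N)⁻¹) :=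
        mul_le_mul_of_nonneg_left hFw2 (pow_nonneg hR0.le n)
    _ = (2 * Real.pi) ^ N * D * R ^ n * ((1 + R * |r|) ^ N)⁻¹ := by ring
end
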